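/- In the discrete-time optimal control problem with state equation X^{k+1} = F(X^k, U^k) and cost J = Φ(X^m) + Σ_{k=0}^{m−1} L(X^k, U^k), if (X^{k*}, U^{k*}) is a minimizer and F, L, Φ are differentiable, then there exist costates λ_k satisfying λ_m = ∇Φ(X^m), λ_k = (D_X F(X^k,U^k))ᵀ λ_{k+1} + ∇_X L(X^k,U^k), and (D_U F(X^k,U^k))ᵀ λ_{k+1} + ∇_U L(X^k,U^k) = 0. -/

import Mathlib

open Matrix

/-- The state trajectory generated by dynamics `F`, initial state `X0`, and a
control sequence `U`. -/
def traj {n p : ℕ} (F : (Fin n → ℝ) → (Fin p → ℝ) → (Fin n → ℝ))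
    (X0 : Fin n → ℝ) (U : ℕ → Fin p → ℝ) : ℕ → Fin n → ℝ
  | 0 => X0
  | k + 1 => F (traj F X0 U k) (U k)

/-- Extend a finitely indexed control sequence by zero. -/
def extCtrl {p m : ℕ} (U : Fin m → Fin p → ℝ) : ℕ → Fin p → ℝ :=
  fun k => if h : k < m then U ⟨k, h⟩ else 0

/-- Total cost `J = Φ(X^m) + Σ_{k<m} L(X^k, U^k)` as a function of the
control sequence. -/
noncomputable def totalCost {n p m : ℕ}
    (F : (Fin n → ℝ) → (Fin p → ℝ) → (Fin n → ℝ))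
    (L : (Fin n → ℝ) → (Fin p → ℝ) → ℝ) (Φ : (Fin n → ℝ) → ℝ)
    (X0 : Fin n → ℝ) (U : Fin m → Fin p → ℝ) : ℝ :=
  Φ (traj F X0 (extCtrl U) m) +
    ∑ k : Fin m, L (traj F X0 (extCtrl U) k) (U k)

namespace DOCAux

/-- Variation of the trajectory in a fixed control direction `e`. -/
noncomputable def varTraj {n p : ℕ} (F : (Fin n → ℝ) → (Fin p → ℝ) → (Fin n → ℝ))
    (X : ℕ → Fin n → ℝ) (u e : ℕ → Fin p → ℝ) : ℕ → Fin n → ℝ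
  | 0 => 0
  | j + 1 => fderiv ℝ (fun x => F x (u j)) (X j) (varTraj F X u e j)
      + fderiv ℝ (fun y => F (X j) y) (u j) (e j)

/-- Costate sequence, indexed by distance from the final time. -/
noncomputable def costateAux {n p : ℕ} (F : (Fin n → ℝ) → (Fin p → ℝ) → (Fin n → ℝ))
    (L : (Fin n → ℝ) → (Fin p → ℝ) → ℝ) (Φ : (Fin n → ℝ) → ℝ)
    (X : ℕ → Fin n → ℝ) (u : ℕ → Fin p → ℝ) (m : ℕ) : ℕ → Fin n → ℝ
  | 0 => fun a => fderiv ℝ Φ (X m) (Pi.single a 1)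
  | i + 1 => fun a =>
      costateAux F L Φ X u m i ⬝ᵥ
          (fderiv ℝ (fun x => F x (u (m - i - 1))) (X (m - i - 1)) (Pi.single a 1))
        + fderiv ℝ (fun x => L x (u (m - i - 1))) (X (m - i - 1)) (Pi.single a 1)

lemma rep_dot {n : ℕ} (c : (Fin n → ℝ) → ℝ)
    (hadd : ∀ x y, c (x + y) = c x + c y)
    (hsmul : ∀ (r : ℝ) x, c (r • x) = r * c x)
    (v : Fin n → ℝ) :
    (fun a => c (Pi.single a 1)) ⬝ᵥ v = c v := by
  let φ : (Fin n → ℝ) →ₗ[ℝ] ℝ :=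
    { toFun := c, map_add' := hadd, map_smul' := fun r x => by simpa using hsmul r x }
  have hv : ∑ a : Fin n, v a • (Pi.single a 1 : Fin n → ℝ) = v := by
    have h1 : ∀ a : Fin n, v a • (Pi.single a 1 : Fin n → ℝ) = Pi.single a (v a) := fun a => by
      rw [← Pi.single_smul, smul_eq_mul, mul_one]
    simp_rw [h1]
    exact Finset.univ_sum_single v
  calc (fun a => c (Pi.single a 1)) ⬝ᵥ v
      = ∑ a, c (Pi.single a 1) * v a := rfl
    _ = ∑ a : Fin n, c (v a • (Pi.single a 1 : Fin n → ℝ)) := by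
        refine Finset.sum_congr rfl fun a _ => ?_
        rw [hsmul, mul_comm]
    _ = c (∑ a : Fin n, v a • (Pi.single a 1 : Fin n → ℝ)) := (map_sum φ _ _).symm
    _ = c v := by rw [hv]

lemma fderiv_prod_apply {n p : ℕ} {E : Type*} [NormedAddCommGroup E] [NormedSpace ℝ E]
    {f : ((Fin n → ℝ) × (Fin p → ℝ)) → E} {x : Fin n → ℝ} {u : Fin p → ℝ}
    (hf : DifferentiableAt ℝ f (x, u)) (v : Fin n → ℝ) (w : Fin p → ℝ) :
    fderiv ℝ f (x, u) (v, w)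
      = fderiv ℝ (fun x' => f (x', u)) x v + fderiv ℝ (fun u' => f (x, u')) u w := by
  have h1 : HasFDerivAt (fun x' => f (x', u))
      ((fderiv ℝ f (x, u)).comp (ContinuousLinearMap.inl ℝ _ _)) x :=
    hf.hasFDerivAt.comp x (hasFDerivAt_prodMk_left x u)
  have h2 : HasFDerivAt (fun u' => f (x, u'))
      ((fderiv ℝ f (x, u)).comp (ContinuousLinearMap.inr ℝ _ _)) u :=
    hf.hasFDerivAt.comp u (hasFDerivAt_prodMk_right x u)
  rw [h1.fderiv, h2.fderiv]
  have hvw : (v, w) = ((v, 0) : (Fin n → ℝ) × (Fin p → ℝ)) + (0, w) := by simp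
  rw [hvw, map_add]
  simp [ContinuousLinearMap.comp_apply]

lemma extCtrl_coe {p m : ℕ} (U : Fin m → Fin p → ℝ) (j : Fin m) :
    extCtrl U (j : ℕ) = U j := by
  unfold extCtrl
  rw [dif_pos j.isLt, Fin.eta]

lemma costateAux_step {n p : ℕ} (F : (Fin n → ℝ) → (Fin p → ℝ) → (Fin n → ℝ))
    (L : (Fin n → ℝ) → (Fin p → ℝ) → ℝ) (Φ : (Fin n → ℝ) → ℝ)
    (X : ℕ → Fin n → ℝ) (u : ℕ → Fin p → ℝ) {m k : ℕ} (hk : k < m) :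
    costateAux F L Φ X u m (m - k) = fun a =>
      costateAux F L Φ X u m (m - (k + 1)) ⬝ᵥ
          (fderiv ℝ (fun x => F x (u k)) (X k) (Pi.single a 1))
        + fderiv ℝ (fun x => L x (u k)) (X k) (Pi.single a 1) := by
  have e1 : m - k = (m - (k + 1)) + 1 := by omega
  have e2 : m - (m - (k + 1)) - 1 = k := by omega
  rw [e1]
  simp only [costateAux]
  rw [e2]

lemma varTraj_zero {n p : ℕ} (F : (Fin n → ℝ) → (Fin p → ℝ) → (Fin n → ℝ))
    (X : ℕ → Fin n → ℝ) (u e : ℕ → Fin p → ℝ) : varTraj F X u e 0 = 0 := by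
  simp [varTraj]

lemma varTraj_succ {n p : ℕ} (F : (Fin n → ℝ) → (Fin p → ℝ) → (Fin n → ℝ))
    (X : ℕ → Fin n → ℝ) (u e : ℕ → Fin p → ℝ) (j : ℕ) :
    varTraj F X u e (j + 1) =
      fderiv ℝ (fun x => F x (u j)) (X j) (varTraj F X u e j)
        + fderiv ℝ (fun y => F (X j) y) (u j) (e j) := by
  simp [varTraj]

end DOCAux

/-- Discrete-time first-order necessary conditions for optimality: if the
control sequence `U*` is a local minimizer of `J`, with `X^k` the associated
trajectory, then there exist costates `λ_k` with `λ_m = ∇Φ(X^m)`,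
`λ_k = (D_X F)ᵀ λ_{k+1} + ∇_X L` and `(D_U F)ᵀ λ_{k+1} + ∇_U L = 0`.
The gradient/Jacobian-transpose identities are expressed through pairings
with arbitrary tangent vectors `v`, `w`. -/
theorem discrete_optimal_control_necessary_conditions {n p m : ℕ}
    (F : (Fin n → ℝ) → (Fin p → ℝ) → (Fin n → ℝ))
    (L : (Fin n → ℝ) → (Fin p → ℝ) → ℝ) (Φ : (Fin n → ℝ) → ℝ)
    (hF : ContDiff ℝ 1 (fun q : (Fin n → ℝ) × (Fin p → ℝ) => F q.1 q.2))
    (hL : ContDiff ℝ 1 (fun q : (Fin n → ℝ) × (Fin p → ℝ) => L q.1 q.2))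
    (hΦ : ContDiff ℝ 1 Φ)
    (X0 : Fin n → ℝ) (Ustar : Fin m → Fin p → ℝ)
    (hmin : IsLocalMin (totalCost F L Φ X0) Ustar)
    (X : ℕ → Fin n → ℝ) (hX : X = traj F X0 (extCtrl Ustar)) :
    ∃ lam : ℕ → Fin n → ℝ,
      (∀ v : Fin n → ℝ, lam m ⬝ᵥ v = fderiv ℝ Φ (X m) v) ∧
      (∀ k : Fin m, ∀ v : Fin n → ℝ,
        lam k ⬝ᵥ v =
          lam (k + 1) ⬝ᵥ (fderiv ℝ (fun x => F x (Ustar k)) (X k) v) +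
            fderiv ℝ (fun x => L x (Ustar k)) (X k) v) ∧
      (∀ k : Fin m, ∀ w : Fin p → ℝ,
        lam (k + 1) ⬝ᵥ (fderiv ℝ (fun u => F (X k) u) (Ustar k) w) +
            fderiv ℝ (fun u => L (X k) u) (Ustar k) w = 0) := by
  subst hX
  have hFd : Differentiable ℝ (fun q : (Fin n → ℝ) × (Fin p → ℝ) => F q.1 q.2) :=
    hF.differentiable one_ne_zero
  have hLd : Differentiable ℝ (fun q : (Fin n → ℝ) × (Fin p → ℝ) => L q.1 q.2) :=
    hL.differentiable one_ne_zero
  have hΦd : Differentiable ℝ Φ := hΦ.differentiable one_ne_zero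
  set Y : ℕ → Fin n → ℝ := traj F X0 (extCtrl Ustar) with hYdef
  set lam : ℕ → Fin n → ℝ :=
    fun k => DOCAux.costateAux F L Φ Y (extCtrl Ustar) m (m - k) with hlam
  -- terminal condition
  have h1 : ∀ v : Fin n → ℝ, lam m ⬝ᵥ v = fderiv ℝ Φ (Y m) v := by
    intro v
    have hrw : lam m = fun a => fderiv ℝ Φ (Y m) (Pi.single a 1) := by
      rw [hlam]
      simp [Nat.sub_self, DOCAux.costateAux]
    rw [hrw]
    exact DOCAux.rep_dot _ (fun x y => by simp) (fun r x => by simp) v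
  -- costate recursion
  have h2 : ∀ k : Fin m, ∀ v : Fin n → ℝ,
      lam k ⬝ᵥ v =
        lam (k + 1) ⬝ᵥ (fderiv ℝ (fun x => F x (Ustar k)) (Y k) v) +
          fderiv ℝ (fun x => L x (Ustar k)) (Y k) v := by
    intro k v
    have hk := k.isLt
    have e1 : m - (k : ℕ) = (m - ((k : ℕ) + 1)) + 1 := by omega
    have e2 : m - (m - ((k : ℕ) + 1)) - 1 = (k : ℕ) := by omega
    have hrw : lam (k : ℕ) = fun a =>
        lam ((k : ℕ) + 1) ⬝ᵥ (fderiv ℝ (fun x => F x (Ustar k)) (Y k) (Pi.single a 1))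
          + fderiv ℝ (fun x => L x (Ustar k)) (Y k) (Pi.single a 1) := by
      have hstep := DOCAux.costateAux_step F L Φ Y (extCtrl Ustar) hk
      rw [DOCAux.extCtrl_coe Ustar k] at hstep
      exact hstep
    rw [hrw]
    refine DOCAux.rep_dot
      (fun v => lam ((k : ℕ) + 1) ⬝ᵥ (fderiv ℝ (fun x => F x (Ustar k)) (Y k) v)
        + fderiv ℝ (fun x => L x (Ustar k)) (Y k) v) ?_ ?_ v
    · intro x y
      simp only [map_add, dotProduct_add]
      ring
    · intro r x
      simp only [_root_.map_smul, dotProduct_smul, smul_eq_mul]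
      ring
  refine ⟨lam, h1, h2, ?_⟩
  -- variational condition in the control direction `w` at time `k`
  intro k w
  have hk : (k : ℕ) < m := k.isLt
  set d : Fin m → Fin p → ℝ := Pi.single k w with hd
  set e : ℕ → Fin p → ℝ := extCtrl d with he
  set δ : ℕ → Fin n → ℝ := DOCAux.varTraj F Y (extCtrl Ustar) e with hδdef
  have hδzero : δ 0 = 0 := by
    rw [hδdef]; exact DOCAux.varTraj_zero F Y (extCtrl Ustar) e
  have hδsucc : ∀ j, δ (j + 1) =
      fderiv ℝ (fun x => F x (extCtrl Ustar j)) (Y j) (δ j)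
        + fderiv ℝ (fun y => F (Y j) y) (extCtrl Ustar j) (e j) := by
    intro j; rw [hδdef]; exact DOCAux.varTraj_succ F Y (extCtrl Ustar) e j
  have hek : e (k : ℕ) = w := by
    rw [he, DOCAux.extCtrl_coe, hd, Pi.single_eq_same]
  have he0 : ∀ j : ℕ, j ≠ (k : ℕ) → e j = 0 := by
    intro j hj
    by_cases hjm : j < m
    · have hne : (⟨j, hjm⟩ : Fin m) ≠ k := by
        intro hcon
        exact hj (by simpa using congrArg Fin.val hcon)
      rw [he]
      unfold extCtrl
      rw [dif_pos hjm, hd, Pi.single_eq_of_ne hne]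
    · rw [he]
      unfold extCtrl
      rw [dif_neg hjm]
  have hδ0 : ∀ j, j ≤ (k : ℕ) → δ j = 0 := by
    intro j
    induction j with
    | zero => intro _; exact hδzero
    | succ j ih =>
      intro hj
      rw [hδsucc j, ih (by omega), he0 j (by omega)]
      simp
  -- derivative of the perturbed trajectory
  have hzero : (fun i => extCtrl Ustar i + (0 : ℝ) • e i) = extCtrl Ustar := by
    funext i; simp
  have hT : ∀ j, HasDerivAt
      (fun t : ℝ => traj F X0 (fun i => extCtrl Ustar i + t • e i) j) (δ j) 0 := by
    intro j
    induction j with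
    | zero =>
      rw [hδzero]
      exact hasDerivAt_const (0 : ℝ) X0
    | succ j ih =>
      have hy : HasDerivAt (fun t : ℝ => extCtrl Ustar j + t • e j) (e j) 0 := by
        simpa using ((hasDerivAt_id (0 : ℝ)).smul_const (e j)).const_add (extCtrl Ustar j)
      have hpair := ih.prodMk hy
      have hpt : ((traj F X0 (fun i => extCtrl Ustar i + (0 : ℝ) • e i) j,
            extCtrl Ustar j + (0 : ℝ) • e j) : (Fin n → ℝ) × (Fin p → ℝ)) = (Y j, extCtrl Ustar j) := by
        rw [hzero, hYdef]; simp
      have hDF : HasFDerivAt (fun q : (Fin n → ℝ) × (Fin p → ℝ) => F q.1 q.2)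
          (fderiv ℝ (fun q : (Fin n → ℝ) × (Fin p → ℝ) => F q.1 q.2) (Y j, extCtrl Ustar j))
          (traj F X0 (fun i => extCtrl Ustar i + (0 : ℝ) • e i) j,
            extCtrl Ustar j + (0 : ℝ) • e j) := by
        rw [hpt]
        exact (hFd _).hasFDerivAt
      have hcomp := hDF.comp_hasDerivAt 0 hpair
      have hval : fderiv ℝ (fun q : (Fin n → ℝ) × (Fin p → ℝ) => F q.1 q.2)
          (Y j, extCtrl Ustar j) (δ j, e j) = δ (j + 1) := by
        rw [DOCAux.fderiv_prod_apply (hFd _) (δ j) (e j), hδsucc j]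
      rw [hval] at hcomp
      exact hcomp
  -- derivative of the final cost term
  have hTΦ : HasDerivAt
      (fun t : ℝ => Φ (traj F X0 (fun i => extCtrl Ustar i + t • e i) m))
      (fderiv ℝ Φ (Y m) (δ m)) 0 := by
    have hD : HasFDerivAt Φ (fderiv ℝ Φ (Y m))
        (traj F X0 (fun i => extCtrl Ustar i + (0 : ℝ) • e i) m) := by
      rw [hzero, hYdef]
      exact (hΦd _).hasFDerivAt
    exact hD.comp_hasDerivAt 0 (hT m)
  -- derivative of each running cost term
  have hTL : ∀ j : Fin m, HasDerivAt
      (fun t : ℝ => L (traj F X0 (fun i => extCtrl Ustar i + t • e i) (j : ℕ))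
        (Ustar j + t • d j))
      (fderiv ℝ (fun x => L x (extCtrl Ustar (j : ℕ))) (Y (j : ℕ)) (δ (j : ℕ))
        + fderiv ℝ (fun y => L (Y (j : ℕ)) y) (extCtrl Ustar (j : ℕ)) (e (j : ℕ))) 0 := by
    intro j
    have hy : HasDerivAt (fun t : ℝ => Ustar j + t • d j) (d j) 0 := by
      simpa using ((hasDerivAt_id (0 : ℝ)).smul_const (d j)).const_add (Ustar j)
    have hpair := (hT (j : ℕ)).prodMk hy
    have hpt : ((traj F X0 (fun i => extCtrl Ustar i + (0 : ℝ) • e i) (j : ℕ),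
          Ustar j + (0 : ℝ) • d j) : (Fin n → ℝ) × (Fin p → ℝ))
        = (Y (j : ℕ), extCtrl Ustar (j : ℕ)) := by
      rw [hzero, hYdef, DOCAux.extCtrl_coe]; simp
    have hDL : HasFDerivAt (fun q : (Fin n → ℝ) × (Fin p → ℝ) => L q.1 q.2)
        (fderiv ℝ (fun q : (Fin n → ℝ) × (Fin p → ℝ) => L q.1 q.2)
          (Y (j : ℕ), extCtrl Ustar (j : ℕ)))
        (traj F X0 (fun i => extCtrl Ustar i + (0 : ℝ) • e i) (j : ℕ),
          Ustar j + (0 : ℝ) • d j) := by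
      rw [hpt]
      exact (hLd _).hasFDerivAt
    have hcomp := hDL.comp_hasDerivAt 0 hpair
    have hed : (d j : Fin p → ℝ) = e (j : ℕ) := by
      rw [he, DOCAux.extCtrl_coe]
    have hval : fderiv ℝ (fun q : (Fin n → ℝ) × (Fin p → ℝ) => L q.1 q.2)
        (Y (j : ℕ), extCtrl Ustar (j : ℕ)) (δ (j : ℕ), d j)
        = fderiv ℝ (fun x => L x (extCtrl Ustar (j : ℕ))) (Y (j : ℕ)) (δ (j : ℕ))
          + fderiv ℝ (fun y => L (Y (j : ℕ)) y) (extCtrl Ustar (j : ℕ)) (e (j : ℕ)) := by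
      rw [DOCAux.fderiv_prod_apply (hLd _) (δ (j : ℕ)) (d j), hed]
    rw [hval] at hcomp
    exact hcomp
  have hsum := HasDerivAt.fun_sum (fun j (_ : j ∈ Finset.univ) => hTL j)
  -- equality of the perturbed controls
  have hce : ∀ t : ℝ, extCtrl (fun i => Ustar i + t • d i)
      = fun j => extCtrl Ustar j + t • e j := by
    intro t
    funext j
    by_cases hjm : j < m
    · rw [he]
      unfold extCtrl
      rw [dif_pos hjm, dif_pos hjm, dif_pos hjm]
    · rw [he]
      unfold extCtrl
      rw [dif_neg hjm, dif_neg hjm, dif_neg hjm]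
      simp
  -- total derivative of the cost along the perturbation
  have hg : HasDerivAt (fun t : ℝ => totalCost F L Φ X0 (fun i => Ustar i + t • d i))
      (fderiv ℝ Φ (Y m) (δ m) +
        ∑ j : Fin m,
          (fderiv ℝ (fun x => L x (extCtrl Ustar (j : ℕ))) (Y (j : ℕ)) (δ (j : ℕ))
            + fderiv ℝ (fun y => L (Y (j : ℕ)) y) (extCtrl Ustar (j : ℕ)) (e (j : ℕ)))) 0 := by
    have hfun : (fun t : ℝ => totalCost F L Φ X0 (fun i => Ustar i + t • d i))
        = fun t : ℝ =>
            Φ (traj F X0 (fun i => extCtrl Ustar i + t • e i) m)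
              + ∑ j : Fin m, L (traj F X0 (fun i => extCtrl Ustar i + t • e i) (j : ℕ))
                  (Ustar j + t • d j) := by
      funext t
      simp only [totalCost]
      rw [hce t]
    rw [hfun]
    exact hTΦ.add hsum
  -- local minimality along the line
  have hmin' : IsLocalMin
      (fun t : ℝ => totalCost F L Φ X0 (fun i => Ustar i + t • d i)) 0 := by
    have hev : ∀ᶠ U' in nhds Ustar, totalCost F L Φ X0 Ustar ≤ totalCost F L Φ X0 U' := hmin
    have hcont : Continuous (fun t : ℝ => (fun i => Ustar i + t • d i :
        Fin m → Fin p → ℝ)) := by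
      apply continuous_pi
      intro i
      exact continuous_const.add (continuous_id.smul continuous_const)
    have htend : Filter.Tendsto (fun t : ℝ => (fun i => Ustar i + t • d i :
        Fin m → Fin p → ℝ)) (nhds 0) (nhds Ustar) := by
      have h0 : (fun i => Ustar i + (0 : ℝ) • d i : Fin m → Fin p → ℝ) = Ustar := by
        funext i; simp
      have := hcont.continuousAt (x := (0 : ℝ))
      rwa [ContinuousAt, h0] at this
    have hev2 := htend.eventually hev
    refine hev2.mono fun t ht => ?_
    simpa using ht
  have hG0 := hmin'.hasDerivAt_eq_zero hg
  -- simplify the sums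
  have huk : extCtrl Ustar (k : ℕ) = Ustar k := DOCAux.extCtrl_coe Ustar k
  have hLUsum : ∑ j : Fin m,
      fderiv ℝ (fun y => L (Y (j : ℕ)) y) (extCtrl Ustar (j : ℕ)) (e (j : ℕ))
      = fderiv ℝ (fun y => L (Y (k : ℕ)) y) (extCtrl Ustar (k : ℕ)) (e (k : ℕ)) := by
    refine Finset.sum_eq_single_of_mem k (Finset.mem_univ k) ?_
    intro j _ hj
    rw [he0 (j : ℕ) (fun h => hj (Fin.val_injective h))]
    simp
  have hLXsum : ∑ j : Fin m,
      fderiv ℝ (fun x => L x (extCtrl Ustar (j : ℕ))) (Y (j : ℕ)) (δ (j : ℕ))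
      = ∑ j ∈ Finset.Ico ((k : ℕ) + 1) m,
          fderiv ℝ (fun x => L x (extCtrl Ustar j)) (Y j) (δ j) := by
    rw [Fin.sum_univ_eq_sum_range
      (fun j => fderiv ℝ (fun x => L x (extCtrl Ustar j)) (Y j) (δ j)) m]
    rw [Finset.range_eq_Ico, ← Finset.sum_Ico_consecutive _ (Nat.zero_le ((k : ℕ) + 1)) hk]
    have hzero' : ∑ j ∈ Finset.Ico 0 ((k : ℕ) + 1),
        fderiv ℝ (fun x => L x (extCtrl Ustar j)) (Y j) (δ j) = 0 := by
      refine Finset.sum_eq_zero fun j hj => ?_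
      rw [hδ0 j (Nat.lt_succ_iff.1 (Finset.mem_Ico.1 hj).2)]
      simp
    rw [hzero', zero_add]
  -- adjoint identity by downward induction
  have hδstep : ∀ j, (k : ℕ) < j → j < m →
      fderiv ℝ (fun x => F x (extCtrl Ustar j)) (Y j) (δ j) = δ (j + 1) := by
    intro j hkj hjm
    rw [hδsucc j, he0 j (by omega)]
    simp
  have key : ∀ i, i ≤ m - ((k : ℕ) + 1) →
      lam (m - i) ⬝ᵥ δ (m - i)
        = fderiv ℝ Φ (Y m) (δ m) + ∑ j ∈ Finset.Ico (m - i) m,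
            fderiv ℝ (fun x => L x (extCtrl Ustar j)) (Y j) (δ j) := by
    intro i
    induction i with
    | zero =>
      intro _
      simpa using h1 (δ m)
    | succ i ih =>
      intro hi
      have hii : i ≤ m - ((k : ℕ) + 1) := by omega
      have hjm : m - (i + 1) < m := by omega
      have hkj : (k : ℕ) < m - (i + 1) := by omega
      have hj1 : m - (i + 1) + 1 = m - i := by omega
      have hstep := h2 ⟨m - (i + 1), hjm⟩ (δ (m - (i + 1)))
      simp only [Fin.val_mk] at hstep
      rw [← DOCAux.extCtrl_coe Ustar ⟨m - (i + 1), hjm⟩] at hstep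
      simp only [Fin.val_mk] at hstep
      rw [hδstep (m - (i + 1)) hkj hjm, hj1, ih hii] at hstep
      rw [hstep, Finset.sum_eq_sum_Ico_succ_bot hjm
        (fun j => fderiv ℝ (fun x => L x (extCtrl Ustar j)) (Y j) (δ j)), hj1]
      ring
  have hkey := key (m - ((k : ℕ) + 1)) le_rfl
  have hmk : m - (m - ((k : ℕ) + 1)) = (k : ℕ) + 1 := by omega
  rw [hmk] at hkey
  have hδk1 : δ ((k : ℕ) + 1)
      = fderiv ℝ (fun y => F (Y (k : ℕ)) y) (extCtrl Ustar (k : ℕ)) w := by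
    rw [hδsucc (k : ℕ), hδ0 (k : ℕ) le_rfl, hek]
    simp
  rw [Finset.sum_add_distrib, hLUsum, hLXsum, hek] at hG0
  rw [← huk, ← hδk1]
  linarith [hkey, hG0]
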